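/- arXiv:2504.10142 — 2 statements merged into one kernel-verified Lean document; each statement's English description precedes it below -/
import Mathlib

section
/- Let Λ > 0, γ ∈ (0,4), a = √(Λ(1-γ/4)), h(t) = -√(Λ/(1-γ/4)) tan(at), and β ∈ ℝ. Define a(t) = β (cos(at))^{-(1-γ/2)/(1-γ/4)} and d(t) = (1/2)(1-γ/2) h(t). If the inequality (1/2)(1-γ/2) h'(t) + 2 a(t)² ≤ 0 holds at t = 0, then (1/2)(1-γ/2)Λ ≥ 2β². Conversely, if (1/2)(1-γ/2)Λ ≥ 2β² and 0 < γ ≤ 2, then (1/2)(1-γ/2) h'(t) + 2a(t)² ≤ 0 for all t in the interval of definition. -/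
open Real Set

/-- Constraint on the initial logarithmic derivative `β` in the doubly warped
rigidity model: with `a = √(Λ(1-γ/4))`, `h(t) = -√(Λ/(1-γ/4)) tan(at)`,
`A(t) = β (cos at)^{-(1-γ/2)/(1-γ/4)}` and `d(t) = (1/2)(1-γ/2) h(t)`:
the inequality `(1/2)(1-γ/2) h' + 2A² ≤ 0` at `t = 0` forces
`(1/2)(1-γ/2)Λ ≥ 2β²`; conversely if `(1/2)(1-γ/2)Λ ≥ 2β²` and `γ ≤ 2` then
the inequality holds on the whole interval. -/
theorem stmt10 (Λ γ β : ℝ) (hΛ : 0 < Λ) (hγ0 : 0 < γ) (hγ4 : γ < 4)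
    (a : ℝ) (ha : a = Real.sqrt (Λ * (1 - γ / 4)))
    (h A d : ℝ → ℝ)
    (hh : h = fun t => -Real.sqrt (Λ / (1 - γ / 4)) * Real.tan (a * t))
    (hA : A = fun t => β * Real.cos (a * t) ^ (-((1 - γ / 2) / (1 - γ / 4))))
    (hd : d = fun t => (1 / 2) * (1 - γ / 2) * h t) :
    ((1 / 2) * (1 - γ / 2) * deriv h 0 + 2 * (A 0) ^ 2 ≤ 0 →
      (1 / 2) * (1 - γ / 2) * Λ ≥ 2 * β ^ 2) ∧
    ((1 / 2) * (1 - γ / 2) * Λ ≥ 2 * β ^ 2 → γ ≤ 2 →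
      ∀ t ∈ Set.Ioo (-(Real.pi / (2 * a))) (Real.pi / (2 * a)),
        (1 / 2) * (1 - γ / 2) * deriv h t + 2 * (A t) ^ 2 ≤ 0) := by
  have hm : 0 < 1 - γ / 4 := by linarith
  have ha0 : 0 < a := by
    rw [ha]; exact Real.sqrt_pos.mpr (by positivity)
  have hsa : Real.sqrt (Λ / (1 - γ / 4)) * a = Λ := by
    rw [ha, ← Real.sqrt_mul (by positivity)]
    have hne : (1 - γ / 4) ≠ 0 := hm.ne'
    rw [show Λ / (1 - γ / 4) * (Λ * (1 - γ / 4)) = Λ ^ 2 by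
      rw [div_mul_eq_mul_div, show Λ * (Λ * (1 - γ / 4)) = Λ ^ 2 * (1 - γ / 4) from by ring,
        mul_div_assoc, div_self hne, mul_one]]
    exact Real.sqrt_sq hΛ.le
  have hderiv : ∀ t : ℝ, Real.cos (a * t) ≠ 0 →
      deriv h t = -Λ / Real.cos (a * t) ^ 2 := by
    intro t hc
    have h1 : HasDerivAt (fun t : ℝ => a * t) a t := by
      simpa using (hasDerivAt_id t).const_mul a
    have h2 : HasDerivAt (fun t : ℝ => Real.tan (a * t))
        (1 / Real.cos (a * t) ^ 2 * a) t := (Real.hasDerivAt_tan hc).comp t h1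
    have h3 : HasDerivAt h
        (-Real.sqrt (Λ / (1 - γ / 4)) * (1 / Real.cos (a * t) ^ 2 * a)) t := by
      rw [hh]; exact h2.const_mul _
    rw [h3.deriv, show -Real.sqrt (Λ / (1 - γ / 4)) * (1 / Real.cos (a * t) ^ 2 * a)
      = -(Real.sqrt (Λ / (1 - γ / 4)) * a) / Real.cos (a * t) ^ 2 from by ring, hsa]
  constructor
  · intro H
    have hc0 : Real.cos (a * 0) = 1 := by simp
    have hd0 : deriv h 0 = -Λ := by
      rw [hderiv 0 (by rw [hc0]; norm_num), hc0]; norm_num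
    have hA0 : A 0 = β := by
      rw [hA]; simp
    rw [hd0, hA0] at H
    nlinarith
  · intro hK hγ2 t ht
    have hat : a * t ∈ Set.Ioo (-(Real.pi / 2)) (Real.pi / 2) := by
      obtain ⟨ht1, ht2⟩ := ht
      constructor
      · have := (mul_lt_mul_iff_right₀ ha0).mpr ht1
        rw [show a * -(Real.pi / (2 * a)) = -(Real.pi / 2) by field_simp] at this
        linarith
      · have := (mul_lt_mul_iff_right₀ ha0).mpr ht2
        rw [show a * (Real.pi / (2 * a)) = Real.pi / 2 by field_simp] at this
        linarith
    have hcpos : 0 < Real.cos (a * t) := Real.cos_pos_of_mem_Ioo hat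
    have hcle : Real.cos (a * t) ≤ 1 := Real.cos_le_one _
    set c := Real.cos (a * t) with hc
    set q : ℝ := (1 - γ / 2) / (1 - γ / 4) with hq
    have hq0 : 0 ≤ q := by
      apply div_nonneg (by linarith) hm.le
    have hq1 : q ≤ 1 := by
      rw [hq, div_le_one hm]; linarith
    rw [hderiv t hcpos.ne', hA]
    simp only
    have hsq : (β * c ^ (-q)) ^ 2 = β ^ 2 * c ^ (-(2 * q)) := by
      have he : (-q) * ((2 : ℕ) : ℝ) = -(2 * q) := by push_cast; ring
      rw [mul_pow, ← Real.rpow_natCast (c ^ (-q)) 2, ← Real.rpow_mul hcpos.le, he]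
    rw [hsq]
    have hmono : c ^ (-(2 * q)) ≤ c ^ (-(2 : ℝ)) :=
      Real.rpow_le_rpow_of_exponent_ge hcpos hcle (by linarith)
    have hc2 : c ^ (-(2 : ℝ)) = 1 / c ^ 2 := by
      rw [Real.rpow_neg hcpos.le, show ((2 : ℝ) = ((2 : ℕ) : ℝ)) by norm_num,
        Real.rpow_natCast]
      exact inv_eq_one_div _
    have key : 2 * (β ^ 2 * c ^ (-(2 * q))) ≤ (1 / 2) * (1 - γ / 2) * Λ * (1 / c ^ 2) := by
      rw [← hc2]
      have h1 : 2 * (β ^ 2 * c ^ (-(2 * q))) ≤ 2 * β ^ 2 * c ^ (-(2 : ℝ)) := by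
        have := mul_le_mul_of_nonneg_left hmono (by positivity : (0:ℝ) ≤ 2 * β ^ 2)
        linarith
      have h2 : 2 * β ^ 2 * c ^ (-(2 : ℝ)) ≤ (1 / 2) * (1 - γ / 2) * Λ * c ^ (-(2 : ℝ)) := by
        apply mul_le_mul_of_nonneg_right hK (Real.rpow_nonneg hcpos.le _)
      linarith
    have hcc : 0 < c ^ 2 := by positivity
    have : (1 / 2) * (1 - γ / 2) * (-Λ / c ^ 2) = -((1 / 2) * (1 - γ / 2) * Λ * (1 / c ^ 2)) := by
      field_simp
    rw [this]
    linarith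
end

section
/- Fix 0 ≤ c ≤ 1. For the metric g = dt² + (sin t)^{1+c}(cos t)^{1-c} ds₁² + (sin t)^{1-c}(cos t)^{1+c} ds₂² on (0, π/2) × S¹ × S¹, the mean curvature of the slice {t} × T² with respect to ∂_t equals 2 cot(2t), and the Ricci curvatures tangent to the slice satisfy Ric(e₁,e₁) = Ric(e₂,e₂) = 2. -/
open Real Set

private lemma hd_sc (p q t : ℝ) (hs : 0 < Real.sin t) (hc : 0 < Real.cos t) :
    HasDerivAt (fun u => Real.sin u ^ p * Real.cos u ^ q)
      (p * (Real.sin t ^ (p - 1) * Real.cos t ^ (q + 1))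
        - q * (Real.sin t ^ (p + 1) * Real.cos t ^ (q - 1))) t := by
  have h := ((Real.hasDerivAt_sin t).rpow_const (p := p) (Or.inl hs.ne')).mul
    ((Real.hasDerivAt_cos t).rpow_const (p := q) (Or.inl hc.ne'))
  refine h.congr_deriv ?_
  rw [Real.rpow_add_one hs.ne', Real.rpow_add_one hc.ne']
  ring

private lemma deriv_sc (p q : ℝ) {t : ℝ} (hs : 0 < Real.sin t) (hc : 0 < Real.cos t) :
    deriv (fun u => Real.sin u ^ p * Real.cos u ^ q) t
      = p * (Real.sin t ^ (p - 1) * Real.cos t ^ (q + 1))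
        - q * (Real.sin t ^ (p + 1) * Real.cos t ^ (q - 1)) :=
  (hd_sc p q t hs hc).deriv

/-- The doubly warped metric `dt² + (sin t)^{1+c}(cos t)^{1-c} ds₁²
+ (sin t)^{1-c}(cos t)^{1+c} ds₂²` on `(0,π/2) × T²`, with warping functions
`φ(t) = (sin t)^{(1+c)/2}(cos t)^{(1-c)/2}`, `ϕ(t) = (sin t)^{(1-c)/2}(cos t)^{(1+c)/2}`:
the mean curvature of the slice is `2 cot(2t)` and the slice-tangent Ricci
curvatures equal `2`. -/
theorem stmt13 (c : ℝ) (hc0 : 0 ≤ c) (hc1 : c ≤ 1)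
    (φ ϕ : ℝ → ℝ)
    (hφ : φ = fun t => Real.sin t ^ ((1 + c) / 2) * Real.cos t ^ ((1 - c) / 2))
    (hϕ : ϕ = fun t => Real.sin t ^ ((1 - c) / 2) * Real.cos t ^ ((1 + c) / 2)) :
    ∀ t ∈ Set.Ioo (0 : ℝ) (Real.pi / 2),
      deriv φ t / φ t + deriv ϕ t / ϕ t = 2 * (Real.cos (2 * t) / Real.sin (2 * t)) ∧
      -(deriv (deriv φ) t / φ t + deriv φ t * deriv ϕ t / (φ t * ϕ t)) = 2 ∧
      -(deriv (deriv ϕ) t / ϕ t + deriv φ t * deriv ϕ t / (φ t * ϕ t)) = 2 := by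
  intro t ht
  set a : ℝ := (1 + c) / 2 with ha
  set b : ℝ := (1 - c) / 2 with hb
  have hpi := Real.pi_pos
  have hspos : ∀ u ∈ Set.Ioo (0 : ℝ) (Real.pi / 2), 0 < Real.sin u := fun u hu =>
    Real.sin_pos_of_pos_of_lt_pi hu.1 (by linarith [hu.2])
  have hcpos : ∀ u ∈ Set.Ioo (0 : ℝ) (Real.pi / 2), 0 < Real.cos u := fun u hu =>
    Real.cos_pos_of_mem_Ioo ⟨by linarith [hu.1], hu.2⟩
  have hs := hspos t ht
  have hc := hcpos t ht
  -- first derivatives at t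
  have h1 : deriv φ t = a * (Real.sin t ^ (a - 1) * Real.cos t ^ (b + 1))
      - b * (Real.sin t ^ (a + 1) * Real.cos t ^ (b - 1)) := by
    rw [hφ]; exact deriv_sc a b hs hc
  have h2 : deriv ϕ t = b * (Real.sin t ^ (b - 1) * Real.cos t ^ (a + 1))
      - a * (Real.sin t ^ (b + 1) * Real.cos t ^ (a - 1)) := by
    rw [hϕ]; exact deriv_sc b a hs hc
  -- second derivatives
  have hEφ : deriv φ =ᶠ[nhds t] fun u =>
      a * (Real.sin u ^ (a - 1) * Real.cos u ^ (b + 1))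
      - b * (Real.sin u ^ (a + 1) * Real.cos u ^ (b - 1)) := by
    filter_upwards [isOpen_Ioo.mem_nhds ht] with u hu
    rw [hφ]; exact deriv_sc a b (hspos u hu) (hcpos u hu)
  have hEϕ : deriv ϕ =ᶠ[nhds t] fun u =>
      b * (Real.sin u ^ (b - 1) * Real.cos u ^ (a + 1))
      - a * (Real.sin u ^ (b + 1) * Real.cos u ^ (a - 1)) := by
    filter_upwards [isOpen_Ioo.mem_nhds ht] with u hu
    rw [hϕ]; exact deriv_sc b a (hspos u hu) (hcpos u hu)
  have h3 : deriv (deriv φ) t =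
      a * ((a - 1) * (Real.sin t ^ (a - 1 - 1) * Real.cos t ^ (b + 1 + 1))
        - (b + 1) * (Real.sin t ^ (a - 1 + 1) * Real.cos t ^ (b + 1 - 1)))
      - b * ((a + 1) * (Real.sin t ^ (a + 1 - 1) * Real.cos t ^ (b - 1 + 1))
        - (b - 1) * (Real.sin t ^ (a + 1 + 1) * Real.cos t ^ (b - 1 - 1))) := by
    rw [hEφ.deriv_eq]
    exact (((hd_sc (a - 1) (b + 1) t hs hc).const_mul a).sub
      ((hd_sc (a + 1) (b - 1) t hs hc).const_mul b)).deriv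
  have h4 : deriv (deriv ϕ) t =
      b * ((b - 1) * (Real.sin t ^ (b - 1 - 1) * Real.cos t ^ (a + 1 + 1))
        - (a + 1) * (Real.sin t ^ (b - 1 + 1) * Real.cos t ^ (a + 1 - 1)))
      - a * ((b + 1) * (Real.sin t ^ (b + 1 - 1) * Real.cos t ^ (a - 1 + 1))
        - (a - 1) * (Real.sin t ^ (b + 1 + 1) * Real.cos t ^ (a - 1 - 1))) := by
    rw [hEϕ.deriv_eq]
    exact (((hd_sc (b - 1) (a + 1) t hs hc).const_mul b).sub
      ((hd_sc (b + 1) (a - 1) t hs hc).const_mul a)).deriv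
  have hφt : φ t = Real.sin t ^ a * Real.cos t ^ b := by rw [hφ]
  have hϕt : ϕ t = Real.sin t ^ b * Real.cos t ^ a := by rw [hϕ]
  have hsa := (Real.rpow_pos_of_pos hs a).ne'
  have hsb := (Real.rpow_pos_of_pos hs b).ne'
  have hca := (Real.rpow_pos_of_pos hc a).ne'
  have hcb := (Real.rpow_pos_of_pos hc b).ne'
  rw [h1, h2, h3, h4, hφt, hϕt, Real.cos_two_mul', Real.sin_two_mul]
  simp only [Real.rpow_add hs, Real.rpow_sub hs, Real.rpow_add hc, Real.rpow_sub hc,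
    Real.rpow_one]
  have hab : a + b = 1 := by rw [ha, hb]; ring
  refine ⟨?_, ?_, ?_⟩
  · field_simp
    ring_nf
    rw [show b = 1 - a by linarith]; ring
  · field_simp
    ring_nf
    rw [show b = 1 - a by linarith]; ring
  · field_simp
    ring_nf
    rw [show b = 1 - a by linarith]; ring
end
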